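/- Let h(x) = −c·n(Γ⁻¹x) on the open cone C = {x ∈ R² : 0 < |x₂| < x₁}, where c > 0, Γ⁻¹ = diag(1, a²) with a² > 1, and n(y) = y/|y|. Then for any solution μ of μ̇ = h(μ) with μ(t) ∈ C on [0,T), the function t ↦ |μ(t)|² satisfies d/dt |μ(t)|² ≤ −2c|a|⁻¹|μ(t)|, and consequently |μ(t)| ≤ (|x| − c|a|⁻¹ t)₊ for 0 ≤ t ≤ |x||a|/c. -/

import Mathlib

/-- Euclidean norm on `ℝ²` (represented as `Fin 2 → ℝ`). -/
noncomputable def nrm2 (z : Fin 2 → ℝ) : ℝ := Real.sqrt (z 0 ^ 2 + z 1 ^ 2)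

/-- The linear map `Γ⁻¹ = diag(1, a²)`. -/
noncomputable def Gmat (a : ℝ) (z : Fin 2 → ℝ) : Fin 2 → ℝ := ![z 0, a ^ 2 * z 1]

/-- For `h(x) = −c n(Γ⁻¹x)` on the cone `C = {0 < |x₂| < x₁}` with `Γ⁻¹ = diag(1,a²)`,
`a² > 1`: along any solution of `μ̇ = h(μ)` staying in `C` on `[0,T)`, the squared norm
satisfies `d/dt |μ(t)|² ≤ −2c|a|⁻¹|μ(t)|`, and consequently
`|μ(t)| ≤ (|μ(0)| − c|a|⁻¹ t)₊` for `0 ≤ t ≤ |μ(0)||a|/c`. -/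
lemma aux_deriv (a c : ℝ) (ha : 1 < a ^ 2) (hc : 0 < c) (μ : ℝ → (Fin 2 → ℝ)) (t : ℝ)
    (h1 : 0 < |μ t 1|) (h2 : |μ t 1| < μ t 0)
    (hμ : HasDerivAt μ (-((c / nrm2 (Gmat a (μ t))) • Gmat a (μ t))) t) :
    ∃ D, HasDerivAt (fun s => nrm2 (μ s)) D t ∧ D ≤ -(c * |a|⁻¹) := by
  have hx0 : 0 < μ t 0 := lt_of_le_of_lt (abs_nonneg _) h2
  have ha' : a ≠ 0 := by intro h; rw [h] at ha; norm_num at ha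
  have haabs : 0 < |a| := abs_pos.mpr ha'
  set x0 := μ t 0 with hx0def
  set x1 := μ t 1 with hx1def
  have hNval : nrm2 (Gmat a (μ t)) = Real.sqrt (x0 ^ 2 + (a ^ 2 * x1) ^ 2) := by
    simp [nrm2, Gmat]
    rfl
  have hN : 0 < nrm2 (Gmat a (μ t)) := by
    rw [hNval]; apply Real.sqrt_pos.mpr; positivity
  have hF : 0 < nrm2 (μ t) := by
    rw [nrm2]; apply Real.sqrt_pos.mpr; positivity
  set N := nrm2 (Gmat a (μ t)) with hNdef
  set F := nrm2 (μ t) with hFdef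
  -- component derivatives
  have hcomp := hasDerivAt_pi.mp hμ
  have hv0 : (-((c / N) • Gmat a (μ t))) 0 = -(c / N * x0) := by
    simp [Gmat]
    exact Or.inl rfl
  have hv1 : (-((c / N) • Gmat a (μ t))) 1 = -(c / N * (a ^ 2 * x1)) := by
    simp [Gmat]
    exact Or.inl (Or.inl rfl)
  have h0 : HasDerivAt (fun s => μ s 0) (-(c / N * x0)) t := hv0 ▸ hcomp 0
  have h1' : HasDerivAt (fun s => μ s 1) (-(c / N * (a ^ 2 * x1))) t := hv1 ▸ hcomp 1
  have hg : HasDerivAt (fun s => (μ s 0) ^ 2 + (μ s 1) ^ 2)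
      ((2 * x0 ^ 1) * -(c / N * x0) + (2 * x1 ^ 1) * -(c / N * (a ^ 2 * x1))) t := by
    exact ((h0.pow 2).add (h1'.pow 2))
  have hgt : x0 ^ 2 + x1 ^ 2 ≠ 0 := by positivity
  have hsq := hg.sqrt hgt
  refine ⟨_, by simpa [nrm2] using hsq, ?_⟩
  -- now prove the bound on the derivative value
  have hFeq : Real.sqrt (x0 ^ 2 + x1 ^ 2) = F := by rw [hFdef, nrm2]
  rw [hFeq]
  -- key inequality: N * F ≤ |a| * (x0^2 + a^2 * x1^2)
  have key : N * F ≤ |a| * (x0 ^ 2 + a ^ 2 * x1 ^ 2) := by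
    have hNF : N * F = Real.sqrt ((x0 ^ 2 + (a ^ 2 * x1) ^ 2) * (x0 ^ 2 + x1 ^ 2)) := by
      rw [hNval, hFdef, nrm2, ← Real.sqrt_mul (by positivity)]
    have hR : |a| * (x0 ^ 2 + a ^ 2 * x1 ^ 2)
        = Real.sqrt (a ^ 2 * (x0 ^ 2 + a ^ 2 * x1 ^ 2) ^ 2) := by
      rw [Real.sqrt_mul (by positivity), Real.sqrt_sq_eq_abs, Real.sqrt_sq_eq_abs,
        abs_of_nonneg (by positivity : (0:ℝ) ≤ x0 ^ 2 + a ^ 2 * x1 ^ 2)]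
    rw [hNF, hR]
    apply Real.sqrt_le_sqrt
    nlinarith [mul_nonneg (sub_nonneg.mpr ha.le) (sq_nonneg (x0 ^ 2)),
      mul_nonneg (sub_nonneg.mpr ha.le) (sq_nonneg (x0 * x1)),
      mul_nonneg (mul_nonneg (sub_nonneg.mpr ha.le) (sq_nonneg a)) (sq_nonneg (x0 * x1)),
      mul_nonneg (sub_nonneg.mpr ha.le) (sq_nonneg (a ^ 2 * x1 ^ 2))]
  have hFr : Real.sqrt (μ t 0 ^ 2 + μ t 1 ^ 2) = F := rfl
  rw [hFr] at hsq
  rw [div_le_iff₀ (by positivity : (0:ℝ) < 2 * F)]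
  have e1 : (c / N) * |a|⁻¹ * (N * F) = c * |a|⁻¹ * F := by
    field_simp
  have e2 : (c / N) * |a|⁻¹ * (|a| * (x0 ^ 2 + a ^ 2 * x1 ^ 2))
      = (c / N) * (x0 ^ 2 + a ^ 2 * x1 ^ 2) := by
    field_simp
  have main : c * |a|⁻¹ * F ≤ (c / N) * (x0 ^ 2 + a ^ 2 * x1 ^ 2) := by
    calc c * |a|⁻¹ * F = (c / N) * |a|⁻¹ * (N * F) := by rw [e1]
      _ ≤ (c / N) * |a|⁻¹ * (|a| * (x0 ^ 2 + a ^ 2 * x1 ^ 2)) :=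
          mul_le_mul_of_nonneg_left key (by positivity)
      _ = (c / N) * (x0 ^ 2 + a ^ 2 * x1 ^ 2) := e2
  nlinarith [main]

theorem stmt14 (a c T : ℝ) (ha : 1 < a ^ 2) (hc : 0 < c) (hT : 0 < T)
    (μ : ℝ → (Fin 2 → ℝ))
    (hcone : ∀ t, 0 ≤ t → t < T → 0 < |μ t 1| ∧ |μ t 1| < μ t 0)
    (hode : ∀ t, 0 ≤ t → t < T →
      HasDerivAt μ (-((c / nrm2 (Gmat a (μ t))) • Gmat a (μ t))) t) :
    (∀ t, 0 ≤ t → t < T →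
      ∃ D : ℝ, HasDerivAt (fun s => nrm2 (μ s) ^ 2) D t ∧
        D ≤ -(2 * c * |a|⁻¹ * nrm2 (μ t))) ∧
    (∀ t, 0 ≤ t → t < T → t ≤ nrm2 (μ 0) * |a| / c →
      nrm2 (μ t) ≤ max (nrm2 (μ 0) - c * |a|⁻¹ * t) 0) := by
  have hF : ∀ t, 0 ≤ t → t < T →
      ∃ D, HasDerivAt (fun s => nrm2 (μ s)) D t ∧ D ≤ -(c * |a|⁻¹) := fun t h0 h1 =>
    aux_deriv a c ha hc μ t (hcone t h0 h1).1 (hcone t h0 h1).2 (hode t h0 h1)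
  have hFnn : ∀ s, 0 ≤ nrm2 (μ s) := fun s => Real.sqrt_nonneg _
  constructor
  · intro t h0t htT
    obtain ⟨D, hD, hDle⟩ := hF t h0t htT
    refine ⟨_, hD.pow 2, ?_⟩
    have h2 := mul_le_mul_of_nonneg_left hDle
      (mul_nonneg (by norm_num : (0:ℝ) ≤ 2) (hFnn t))
    push_cast
    nlinarith [h2, hFnn t]
  · intro t h0t htT _
    set k := c * |a|⁻¹ with hk
    have hanti : AntitoneOn (fun s => nrm2 (μ s) + k * s) (Set.Icc 0 t) := by
      apply antitoneOn_of_deriv_nonpos (convex_Icc 0 t)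
      · intro s hs
        obtain ⟨D, hD, _⟩ := hF s hs.1 (lt_of_le_of_lt hs.2 htT)
        exact ((hD.add ((hasDerivAt_id s).const_mul k)).continuousAt).continuousWithinAt
      · intro s hs
        rw [interior_Icc] at hs
        obtain ⟨D, hD, _⟩ := hF s hs.1.le (hs.2.trans htT)
        exact ((hD.add ((hasDerivAt_id s).const_mul k)).differentiableAt).differentiableWithinAt
      · intro s hs
        rw [interior_Icc] at hs
        obtain ⟨D, hD, hDle⟩ := hF s hs.1.le (hs.2.trans htT)
        have hlin : HasDerivAt (fun x : ℝ => k * x) k s := by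
          simpa using (hasDerivAt_id s).const_mul k
        rw [HasDerivAt.deriv (f := fun s => nrm2 (μ s) + k * s) (hD.add hlin)]
        linarith
    have hle := hanti (Set.left_mem_Icc.mpr h0t) (Set.right_mem_Icc.mpr h0t) h0t
    simp only [mul_zero, add_zero] at hle
    have : nrm2 (μ t) ≤ nrm2 (μ 0) - k * t := by linarith
    exact le_trans this (le_max_left _ _)
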